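/- (Theorem 1: nonlinear tensegrity dynamics.) Let n : ℝ → (Fin n_n → EuclideanSpace ℝ (Fin 3)) be a twice-differentiable trajectory of nodal configurations with l i (n t) ≠ 0 for every member i and time t, let D be a linear endomorphism of the space of nodal vectors (the damping operator), and let f_ex : ℝ → (Fin n_n → EuclideanSpace ℝ (Fin 3)) be the external nodal force. Then n satisfies the Lagrange equations, i.e., for all t: d/dt [∇T(ṅ(t))] + ∇V_e(n t) + ∇V_g(n t) = f_ex t − D(ṅ t), if and only if for all t: M(n̈ t) + D(ṅ t) + K(n t)(n t) = f_ex t − ĝ, where M is the mass operator (M u) p = Σ_q (M̄ p q) • u q, K(n) is the stiffness operator (K(n) u) p = Σ_i (x i n) * (C i p) • (Σ_q (C i q) • u q), and ĝ is the nodal gravity vector ĝ p = (g/2) * (Σ_i m i * |C| i p) • e₃. -/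

import Mathlib

open scoped RealInnerProductSpace
open Matrix

noncomputable section

/-- The Euclidean space of nodal vectors of a structure with `n_n` nodes. -/
abbrev NodalSpace (n_n : ℕ) := PiLp 2 (fun _ : Fin n_n => EuclideanSpace ℝ (Fin 3))

namespace TsgDyn

variable {n_n n_e : ℕ}

/-- Third standard basis vector of `EuclideanSpace ℝ (Fin 3)` (the Z direction). -/
def e₃ : EuclideanSpace ℝ (Fin 3) := EuclideanSpace.single (2 : Fin 3) (1 : ℝ)

/-- Reduced mass matrix `M̄ = (1/6)(|C|ᵀ m̂ |C| + ⌊|C|ᵀ m̂ |C|⌋)`. -/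
def Mbar (C : Matrix (Fin n_e) (Fin n_n) ℝ) (m : Fin n_e → ℝ) :
    Matrix (Fin n_n) (Fin n_n) ℝ :=
  (1/6 : ℝ) • ((C.map abs)ᵀ * Matrix.diagonal m * (C.map abs) +
    Matrix.diagonal fun p => ((C.map abs)ᵀ * Matrix.diagonal m * (C.map abs)) p p)

/-- Kinetic energy `T(v) = (1/2) Σ_{p,q} M̄ p q ⟪v p, v q⟫`. -/
def T (C : Matrix (Fin n_e) (Fin n_n) ℝ) (m : Fin n_e → ℝ) (v : NodalSpace n_n) : ℝ :=
  (1/2) * ∑ p, ∑ q, Mbar C m p q * ⟪v p, v q⟫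

/-- Member length `l i n = ‖Σ_q (C i q) • n q‖`. -/
def len (C : Matrix (Fin n_e) (Fin n_n) ℝ) (i : Fin n_e) (n : NodalSpace n_n) : ℝ :=
  ‖∑ q, C i q • n q‖

/-- Force density `x i n = E i * A i * (1 / l0 i − 1 / (l i n))`. -/
def fd (C : Matrix (Fin n_e) (Fin n_n) ℝ) (A E l0 : Fin n_e → ℝ) (i : Fin n_e)
    (n : NodalSpace n_n) : ℝ :=
  E i * A i * (1 / l0 i - 1 / len C i n)

/-- Strain potential energy `V_e(n) = Σ_i (E i A i / (2 l0 i)) (l i n − l0 i)²`. -/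
def Ve (C : Matrix (Fin n_e) (Fin n_n) ℝ) (A E l0 : Fin n_e → ℝ) (n : NodalSpace n_n) : ℝ :=
  ∑ i, (E i * A i / (2 * l0 i)) * (len C i n - l0 i) ^ 2

/-- Gravitational potential energy `V_g(n) = Σ_i (m i g / 2)(⟪n (j i), e₃⟫ + ⟪n (k i), e₃⟫)`. -/
def Vg (j k : Fin n_e → Fin n_n) (m : Fin n_e → ℝ) (g : ℝ) (n : NodalSpace n_n) : ℝ :=
  ∑ i, (m i * g / 2) * (⟪n (j i), e₃⟫ + ⟪n (k i), e₃⟫)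

/-- Mass operator `(M u) p = Σ_q (M̄ p q) • u q`. -/
def Mop (C : Matrix (Fin n_e) (Fin n_n) ℝ) (m : Fin n_e → ℝ) (u : NodalSpace n_n) :
    NodalSpace n_n :=
  (WithLp.equiv 2 (∀ _ : Fin n_n, EuclideanSpace ℝ (Fin 3))).symm
    fun p => ∑ q, Mbar C m p q • u q

/-- Stiffness operator `(K(n) u) p = Σ_i (x i n)(C i p) • (Σ_q (C i q) • u q)`. -/
def Kop (C : Matrix (Fin n_e) (Fin n_n) ℝ) (A E l0 : Fin n_e → ℝ) (n u : NodalSpace n_n) :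
    NodalSpace n_n :=
  (WithLp.equiv 2 (∀ _ : Fin n_n, EuclideanSpace ℝ (Fin 3))).symm
    fun p => ∑ i, (fd C A E l0 i n * C i p) • (∑ q, C i q • u q)

/-- Nodal gravity vector `ĝ p = (g/2)(Σ_i m i |C i p|) • e₃`. -/
def ghat (C : Matrix (Fin n_e) (Fin n_n) ℝ) (m : Fin n_e → ℝ) (g : ℝ) : NodalSpace n_n :=
  (WithLp.equiv 2 (∀ _ : Fin n_n, EuclideanSpace ℝ (Fin 3))).symm
    fun p => ((g/2) * ∑ i, m i * |C i p|) • e₃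


/-! ### Auxiliary lemmas -/

lemma Mop_apply' (C : Matrix (Fin n_e) (Fin n_n) ℝ) (m : Fin n_e → ℝ) (u : NodalSpace n_n)
    (p : Fin n_n) : Mop C m u p = ∑ q, Mbar C m p q • u q := rfl

lemma Mbar_symm (C : Matrix (Fin n_e) (Fin n_n) ℝ) (m : Fin n_e → ℝ) (p q : Fin n_n) :
    Mbar C m p q = Mbar C m q p := by
  have h : ∀ a b : Fin n_n, ((C.map abs)ᵀ * Matrix.diagonal m * (C.map abs)) a b
      = ((C.map abs)ᵀ * Matrix.diagonal m * (C.map abs)) b a := by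
    intro a b
    simp only [Matrix.mul_apply, Matrix.transpose_apply, Matrix.map_apply,
      Matrix.diagonal_apply]
    simp only [mul_ite, mul_zero, Finset.sum_ite_eq', Finset.mem_univ, if_true]
    exact Finset.sum_congr rfl fun x _ => by ring
  unfold Mbar
  by_cases hpq : p = q
  · subst hpq; rfl
  · simp [Matrix.diagonal_apply_ne _ hpq, Matrix.diagonal_apply_ne _ (Ne.symm hpq), h p q]

/-- Helper: component of a finite sum in a `PiLp` space. -/
lemma piLp_sum_apply {ι : Type*} (s : Finset ι) (f : ι → NodalSpace n_n) (p : Fin n_n) :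
    (∑ i ∈ s, f i) p = ∑ i ∈ s, f i p := by
  classical
  induction s using Finset.induction with
  | empty => rfl
  | insert _ _ h ih => rw [Finset.sum_insert h, Finset.sum_insert h, PiLp.add_apply, ih]

instance : ContinuousSMul ℝ (NodalSpace n_n) := IsBoundedSMul.continuousSMul

instance : ContinuousSMul ℝ (EuclideanSpace ℝ (Fin 3)) := IsBoundedSMul.continuousSMul

/-- The mass operator as a continuous linear map. -/
def MopL (C : Matrix (Fin n_e) (Fin n_n) ℝ) (m : Fin n_e → ℝ) :
    NodalSpace n_n →L[ℝ] NodalSpace n_n :=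
  LinearMap.toContinuousLinearMap
  { toFun := Mop C m
    map_add' := fun u v => by
      ext p
      simp [Mop_apply', PiLp.add_apply, smul_add, Finset.sum_add_distrib]
    map_smul' := fun c v => by
      simp only [RingHom.id_apply]
      unfold Mop
      change _ = (WithLp.equiv 2 (∀ _ : Fin n_n, EuclideanSpace ℝ (Fin 3))).symm
        (c • fun p => ∑ q, Mbar C m p q • v q)
      refine congrArg _ (funext fun p => ?_)
      rw [Pi.smul_apply, Finset.smul_sum]
      exact Finset.sum_congr rfl fun q _ => by
        rw [PiLp.smul_apply]; exact smul_comm _ _ _ }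

lemma MopL_apply (C : Matrix (Fin n_e) (Fin n_n) ℝ) (m : Fin n_e → ℝ) (u : NodalSpace n_n) :
    MopL C m u = Mop C m u := rfl

lemma inner_Mop (C : Matrix (Fin n_e) (Fin n_n) ℝ) (m : Fin n_e → ℝ)
    (a b : NodalSpace n_n) :
    ⟪a, Mop C m b⟫ = ∑ p, ∑ q, Mbar C m p q * ⟪a p, b q⟫ := by
  simp only [PiLp.inner_apply (𝕜 := ℝ) (f := fun _ : Fin n_n => EuclideanSpace ℝ (Fin 3)),
    Mop_apply']
  exact Finset.sum_congr rfl fun p _ => by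
    rw [inner_sum]
    exact Finset.sum_congr rfl fun q _ => real_inner_smul_right _ _ _

lemma inner_Mop_symm (C : Matrix (Fin n_e) (Fin n_n) ℝ) (m : Fin n_e → ℝ)
    (u w : NodalSpace n_n) : ⟪u, Mop C m w⟫ = ⟪Mop C m u, w⟫ := by
  rw [inner_Mop, real_inner_comm, inner_Mop, Finset.sum_comm]
  refine Finset.sum_congr rfl fun p _ => Finset.sum_congr rfl fun q _ => ?_
  rw [Mbar_symm, real_inner_comm]

lemma hasGradientAt_T (C : Matrix (Fin n_e) (Fin n_n) ℝ) (m : Fin n_e → ℝ)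
    (v : NodalSpace n_n) : HasGradientAt (T C m) (Mop C m v) v := by
  have hT : T C m = fun w => (1/2 : ℝ) * ⟪w, MopL C m w⟫ := by
    funext w
    rw [T, MopL_apply, inner_Mop]
  have hD : HasFDerivAt (fun w : NodalSpace n_n => (1/2 : ℝ) * ⟪w, MopL C m w⟫)
      (((1:ℝ)/2) • ((fderivInnerCLM ℝ ((v : NodalSpace n_n), MopL C m v)).comp
        ((ContinuousLinearMap.id ℝ _).prod (MopL C m)))) v :=
    ((hasFDerivAt_id v).inner ℝ (MopL C m).hasFDerivAt).const_mul _
  rw [hasGradientAt_iff_hasFDerivAt, hT]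
  refine hD.congr_fderiv ?_
  ext h
  simp only [ContinuousLinearMap.smul_apply, ContinuousLinearMap.comp_apply,
    ContinuousLinearMap.prod_apply, ContinuousLinearMap.coe_id', id_eq,
    fderivInnerCLM_apply, InnerProductSpace.toDual_apply_apply, smul_eq_mul, MopL_apply]
  rw [inner_Mop_symm, real_inner_comm h (Mop C m v)]
  ring

/-- The member vector map as a continuous linear map. -/
def membL (C : Matrix (Fin n_e) (Fin n_n) ℝ) (i : Fin n_e) :
    NodalSpace n_n →L[ℝ] EuclideanSpace ℝ (Fin 3) :=
  LinearMap.toContinuousLinearMap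
  { toFun := fun v => ∑ q, C i q • v q
    map_add' := fun u v => by
      simp [PiLp.add_apply, smul_add, Finset.sum_add_distrib]
    map_smul' := fun c v => by
      simp only [RingHom.id_apply, Finset.smul_sum]
      exact Finset.sum_congr rfl fun q _ => by
        rw [PiLp.smul_apply]; exact smul_comm _ _ _ }

lemma membL_apply (C : Matrix (Fin n_e) (Fin n_n) ℝ) (i : Fin n_e) (v : NodalSpace n_n) :
    membL C i v = ∑ q, C i q • v q := rfl

lemma len_eq_norm (C : Matrix (Fin n_e) (Fin n_n) ℝ) (i : Fin n_e) (v : NodalSpace n_n) :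
    len C i v = ‖membL C i v‖ := rfl

/-- Gradient of a single strain energy term. -/
def KopG (C : Matrix (Fin n_e) (Fin n_n) ℝ) (A E l0 : Fin n_e → ℝ) (i : Fin n_e)
    (v : NodalSpace n_n) : NodalSpace n_n :=
  (WithLp.equiv 2 (∀ _ : Fin n_n, EuclideanSpace ℝ (Fin 3))).symm
    fun p => (fd C A E l0 i v * C i p) • (membL C i v)

lemma inner_KopG (C : Matrix (Fin n_e) (Fin n_n) ℝ) (A E l0 : Fin n_e → ℝ) (i : Fin n_e)
    (v h : NodalSpace n_n) :
    ⟪KopG C A E l0 i v, h⟫ = fd C A E l0 i v * ⟪membL C i v, membL C i h⟫ := by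
  have : ∀ p, ⟪KopG C A E l0 i v p, h p⟫
      = fd C A E l0 i v * (C i p * ⟪membL C i v, h p⟫) := fun p => by
    rw [show KopG C A E l0 i v p = (fd C A E l0 i v * C i p) • (membL C i v) from rfl,
      real_inner_smul_left]; ring
  rw [PiLp.inner_apply (𝕜 := ℝ) (f := fun _ : Fin n_n => EuclideanSpace ℝ (Fin 3))]
  simp only [this]
  rw [← Finset.mul_sum, membL_apply C i h, inner_sum]
  congr 1
  exact Finset.sum_congr rfl fun p _ => by rw [real_inner_smul_right]

lemma hasGradientAt_Ve_term (C : Matrix (Fin n_e) (Fin n_n) ℝ) (A E l0 : Fin n_e → ℝ)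
    (i : Fin n_e) (v : NodalSpace n_n) (hl0 : 0 < l0 i) (hlen : len C i v ≠ 0) :
    HasGradientAt (fun w => (E i * A i / (2 * l0 i)) * (len C i w - l0 i) ^ 2)
      (KopG C A E l0 i v) v := by
  set H := membL C i with hH
  have hsqrt : ∀ w : NodalSpace n_n, Real.sqrt ⟪H w, H w⟫ = len C i w := fun w => by
    rw [real_inner_self_eq_norm_sq, Real.sqrt_sq (norm_nonneg _), len_eq_norm]
  have hnorm : ‖H v‖ ≠ 0 := by rw [hH, ← len_eq_norm]; exact hlen
  have hs0 : ⟪H v, H v⟫ ≠ 0 := by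
    rw [real_inner_self_eq_norm_sq]; exact pow_ne_zero 2 hnorm
  have hq : HasFDerivAt (fun w : NodalSpace n_n => ⟪H w, H w⟫)
      ((fderivInnerCLM ℝ (H v, H v)).comp (H.prod H)) v :=
    H.hasFDerivAt.inner ℝ H.hasFDerivAt
  have hφ : HasDerivAt (fun s => (E i * A i / (2 * l0 i)) * (Real.sqrt s - l0 i) ^ 2)
      ((E i * A i / (2 * l0 i)) * ((2 : ℕ) * (Real.sqrt ⟪H v, H v⟫ - l0 i) ^ 1
        * (1 / (2 * Real.sqrt ⟪H v, H v⟫)))) ⟪H v, H v⟫ :=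
    (((Real.hasDerivAt_sqrt hs0).sub_const (l0 i)).pow 2).const_mul _
  have hcomp := hφ.comp_hasFDerivAt v hq
  have hfun : ((fun s => (E i * A i / (2 * l0 i)) * (Real.sqrt s - l0 i) ^ 2)
        ∘ fun w : NodalSpace n_n => ⟪H w, H w⟫)
      = fun w => (E i * A i / (2 * l0 i)) * (len C i w - l0 i) ^ 2 := by
    funext w
    simp only [Function.comp_apply, hsqrt]
  rw [hfun] at hcomp
  rw [hasGradientAt_iff_hasFDerivAt]
  refine hcomp.congr_fderiv ?_
  ext h
  simp only [ContinuousLinearMap.coe_smul', Pi.smul_apply, ContinuousLinearMap.comp_apply,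
    ContinuousLinearMap.prod_apply, fderivInnerCLM_apply, InnerProductSpace.toDual_apply_apply,
    smul_eq_mul]
  rw [inner_KopG, real_inner_comm (H h) (H v), hsqrt v]
  have hcoef : (E i * A i / (2 * l0 i)) * ((2 : ℕ) * (len C i v - l0 i) ^ 1
      * (1 / (2 * len C i v))) * 2 = fd C A E l0 i v := by
    rw [fd]
    field_simp
    ring
  rw [← hcoef]; ring

lemma hasGradientAt_Ve (C : Matrix (Fin n_e) (Fin n_n) ℝ) (A E l0 : Fin n_e → ℝ)
    (v : NodalSpace n_n) (hl0 : ∀ i, 0 < l0 i) (hlen : ∀ i, len C i v ≠ 0) :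
    HasGradientAt (Ve C A E l0) (Kop C A E l0 v v) v := by
  have hsum : HasFDerivAt (fun w => ∑ i, (E i * A i / (2 * l0 i)) * (len C i w - l0 i) ^ 2)
      (∑ i, (InnerProductSpace.toDual ℝ (NodalSpace n_n)) (KopG C A E l0 i v)) v :=
    HasFDerivAt.fun_sum fun i _ =>
      (hasGradientAt_Ve_term C A E l0 i v (hl0 i) (hlen i)).hasFDerivAt
  rw [hasGradientAt_iff_hasFDerivAt]
  have hVe : Ve C A E l0 = fun w => ∑ i, (E i * A i / (2 * l0 i)) * (len C i w - l0 i) ^ 2 :=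
    rfl
  rw [hVe]
  have hKop : Kop C A E l0 v v = ∑ i, KopG C A E l0 i v := by
    ext p
    rw [piLp_sum_apply]
    rw [show Kop C A E l0 v v p = ∑ i, (fd C A E l0 i v * C i p) • (∑ q, C i q • v q)
      from rfl]
    rfl
  rw [hKop, map_sum]
  exact hsum

lemma Vg_eq_inner (j k : Fin n_e → Fin n_n) (hjk : ∀ i, j i ≠ k i)
    (C : Matrix (Fin n_e) (Fin n_n) ℝ)
    (hC : ∀ i p, C i p = if p = k i then 1 else if p = j i then -1 else 0)
    (m : Fin n_e → ℝ) (g : ℝ) (v : NodalSpace n_n) :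
    Vg j k m g v = ⟪ghat C m g, v⟫ := by
  have habs : ∀ i p, |C i p| = (if p = k i then (1:ℝ) else 0) + (if p = j i then 1 else 0) := by
    intro i p
    rw [hC i p]
    by_cases h1 : p = k i
    · subst h1
      rw [if_pos rfl, if_pos rfl, if_neg (Ne.symm (hjk i)), abs_one]; norm_num
    · rw [if_neg h1, if_neg h1]
      by_cases h2 : p = j i
      · subst h2; rw [if_pos rfl, if_pos rfl]; norm_num
      · rw [if_neg h2, if_neg h2, abs_zero]; norm_num
  rw [PiLp.inner_apply (𝕜 := ℝ) (f := fun _ : Fin n_n => EuclideanSpace ℝ (Fin 3))]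
  have hterm : ∀ p, ⟪ghat C m g p, v p⟫
      = ∑ i, (g/2) * (m i * |C i p|) * ⟪e₃, v p⟫ := fun p => by
    rw [show ghat C m g p = ((g/2) * ∑ i, m i * |C i p|) • e₃ from rfl,
      real_inner_smul_left, Finset.mul_sum, Finset.sum_mul]
  simp only [hterm]
  rw [Finset.sum_comm, Vg]
  refine Finset.sum_congr rfl fun i _ => ?_
  simp only [habs i]
  have : ∀ p, (g/2) * (m i * ((if p = k i then (1:ℝ) else 0) + if p = j i then 1 else 0))
      * ⟪e₃, v p⟫
      = (if p = k i then (g/2) * m i * ⟪e₃, v p⟫ else 0)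
        + (if p = j i then (g/2) * m i * ⟪e₃, v p⟫ else 0) := fun p => by
    rcases eq_or_ne p (k i) with h1 | h1
    · subst h1
      rw [if_pos rfl, if_pos rfl, if_neg (fun hh => hjk i hh.symm),
        if_neg (fun hh => hjk i hh.symm)]
      ring
    · rw [if_neg h1, if_neg h1]
      rcases eq_or_ne p (j i) with h2 | h2
      · subst h2; rw [if_pos rfl, if_pos rfl]; ring
      · rw [if_neg h2, if_neg h2]; ring
  simp only [this]
  rw [Finset.sum_add_distrib, Finset.sum_ite_eq', Finset.sum_ite_eq']
  simp only [Finset.mem_univ, if_true]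
  linear_combination (g/2 * m i) * real_inner_comm e₃ (v (k i))
    + (g/2 * m i) * real_inner_comm e₃ (v (j i))

lemma hasGradientAt_Vg (j k : Fin n_e → Fin n_n) (hjk : ∀ i, j i ≠ k i)
    (C : Matrix (Fin n_e) (Fin n_n) ℝ)
    (hC : ∀ i p, C i p = if p = k i then 1 else if p = j i then -1 else 0)
    (m : Fin n_e → ℝ) (g : ℝ) (v : NodalSpace n_n) :
    HasGradientAt (Vg j k m g) (ghat C m g) v := by
  rw [hasGradientAt_iff_hasFDerivAt]
  refine ((InnerProductSpace.toDual ℝ (NodalSpace n_n)) (ghat C m g)).hasFDerivAt.congr_of_eventuallyEq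
    (Filter.Eventually.of_forall fun w => ?_)
  rw [Vg_eq_inner j k hjk C hC m g w, InnerProductSpace.toDual_apply_apply]

/-- **Theorem 1 (nonlinear tensegrity dynamics).** A twice-differentiable nodal trajectory
satisfies the Lagrange equations `d/dt[∇T(ṅ)] + ∇V_e(n) + ∇V_g(n) = f_ex − D ṅ` if and only
if it satisfies the finite element dynamics `M n̈ + D ṅ + K(n) n = f_ex − ĝ`. -/
theorem lagrange_iff_fem_dynamics
    (j k : Fin n_e → Fin n_n) (hjk : ∀ i, j i ≠ k i)
    (C : Matrix (Fin n_e) (Fin n_n) ℝ)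
    (hC : ∀ i p, C i p = if p = k i then 1 else if p = j i then -1 else 0)
    (A E l0 m : Fin n_e → ℝ)
    (hA : ∀ i, 0 < A i) (hE : ∀ i, 0 < E i) (hl0 : ∀ i, 0 < l0 i) (hm : ∀ i, 0 ≤ m i)
    (g : ℝ) (hg : 0 ≤ g)
    (n : ℝ → NodalSpace n_n)
    (hn : ∀ t, DifferentiableAt ℝ n t)
    (hn' : ∀ t, DifferentiableAt ℝ (deriv n) t)
    (hlen : ∀ i t, len C i (n t) ≠ 0)
    (D : NodalSpace n_n →ₗ[ℝ] NodalSpace n_n)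
    (f_ex : ℝ → NodalSpace n_n) :
    (∀ t, deriv (fun s => gradient (T C m) (deriv n s)) t
        + gradient (Ve C A E l0) (n t) + gradient (Vg j k m g) (n t)
        = f_ex t - D (deriv n t)) ↔
      (∀ t, Mop C m (deriv (deriv n) t) + D (deriv n t) + Kop C A E l0 (n t) (n t)
        = f_ex t - ghat C m g) := by
  have hT' : ∀ t, deriv (fun s => gradient (T C m) (deriv n s)) t
      = Mop C m (deriv (deriv n) t) := by
    intro t
    have hfun : (fun s => gradient (T C m) (deriv n s)) = fun s => MopL C m (deriv n s) :=
      funext fun s => (hasGradientAt_T C m (deriv n s)).gradient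
    rw [hfun]
    exact (((MopL C m).hasFDerivAt).comp_hasDerivAt t (hn' t).hasDerivAt).deriv
  have hVe' : ∀ t, gradient (Ve C A E l0) (n t) = Kop C A E l0 (n t) (n t) := fun t =>
    (hasGradientAt_Ve C A E l0 (n t) hl0 (fun i => hlen i t)).gradient
  have hVg' : ∀ t, gradient (Vg j k m g) (n t) = ghat C m g := fun t =>
    (hasGradientAt_Vg j k hjk C hC m g (n t)).gradient
  constructor
  · intro h t
    have ht := h t
    rw [hT', hVe', hVg'] at ht
    rw [eq_sub_iff_add_eq] at ht ⊢
    rw [← ht]; abel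
  · intro h t
    have ht := h t
    rw [hT', hVe', hVg']
    rw [eq_sub_iff_add_eq] at ht ⊢
    rw [← ht]; abel

end TsgDyn

end
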